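/- arXiv:1605.00588 — 3 statements merged into one kernel-verified Lean document; each statement's English description precedes it below -/
import Mathlib

section
/- Let ε > 0, z₀ = (q₀, p₀) ∈ ℝ^d × ℝ^d, and let g^ε_z denote the Gaussian wave packet with centre z = (q, p). Then for every x ∈ ℝ^d, (2πε)^{−d} ∫_{ℝ^{2d}} ⟨g^ε_z, g^ε_{z₀}⟩ · g^ε_z(x) dz = g^ε_{z₀}(x), where ⟨g^ε_z, g^ε_{z₀}⟩ = exp(−(1/(4ε))|z − z₀|² + (i/(2ε))(p + p₀)·(q − q₀)) and the integral is over z = (q, p) ∈ ℝ^{2d} with respect to Lebesgue measure. -/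
open MeasureTheory

/-- The Gaussian wave packet `g^ε_{(q,p)}(x) = (πε)^{-d/4}
exp(−|x−q|²/(2ε) + (i/ε) p·(x−q))`. -/
noncomputable def gaussWP (ε : ℝ) {d : ℕ} (q p x : EuclideanSpace ℝ (Fin d)) : ℂ :=
  (((Real.pi * ε) ^ (-(d : ℝ) / 4) : ℝ) : ℂ) *
    Complex.exp (((-(‖x - q‖ ^ 2) / (2 * ε) : ℝ) : ℂ) +
      Complex.I / (ε : ℂ) * ((inner ℝ p (x - q) : ℝ) : ℂ))

/-- The combined exponent of overlap times wave packet, in the normal form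
`(real) + (real) * I`. -/
noncomputable def fbiPhi (ε : ℝ) {d : ℕ} (q₀ p₀ x : EuclideanSpace ℝ (Fin d))
    (z : EuclideanSpace ℝ (Fin d) × EuclideanSpace ℝ (Fin d)) : ℂ :=
  ((-(1 / (4 * ε)) * (‖z.1 - q₀‖ ^ 2 + ‖z.2 - p₀‖ ^ 2) - ‖x - z.1‖ ^ 2 / (2 * ε) : ℝ) : ℂ)
    + (((inner ℝ (z.2 + p₀) (z.1 - q₀) : ℝ) / (2 * ε)
        + (inner ℝ z.2 (x - z.1) : ℝ) / ε : ℝ) : ℂ) * Complex.I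

/-- Gaussian integral with an extra constant in the exponent. -/
lemma fbi_gauss_aux {d : ℕ} {β : ℝ} (hβ : 0 < β) (c k : ℂ)
    (w : EuclideanSpace ℝ (Fin d)) :
    ∫ v : EuclideanSpace ℝ (Fin d),
        Complex.exp ((-((β : ℝ) : ℂ) * (‖v‖ : ℂ) ^ 2 + c * ((inner ℝ w v : ℝ) : ℂ)) + k)
      = ((Real.pi : ℂ) / ((β : ℝ) : ℂ)) ^ ((d : ℂ) / 2) *
          Complex.exp (c ^ 2 * (‖w‖ : ℂ) ^ 2 / (4 * ((β : ℝ) : ℂ)) + k) := by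
  have h : ∀ v : EuclideanSpace ℝ (Fin d),
      Complex.exp ((-((β : ℝ) : ℂ) * (‖v‖ : ℂ) ^ 2 + c * ((inner ℝ w v : ℝ) : ℂ)) + k)
        = Complex.exp (-((β : ℝ) : ℂ) * (‖v‖ : ℂ) ^ 2 + c * ((inner ℝ w v : ℝ) : ℂ))
            * Complex.exp k := fun v => Complex.exp_add _ _
  simp only [h, integral_mul_const]
  rw [GaussianFourier.integral_cexp_neg_mul_sq_norm_add (by simpa using hβ) c w]
  simp only [finrank_euclideanSpace_fin]
  rw [mul_assoc, ← Complex.exp_add]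

/-- FBI reconstruction identity for a Gaussian initial state:
`(2πε)^{−d} ∫ ⟨g^ε_z, g^ε_{z₀}⟩ g^ε_z(x) dz = g^ε_{z₀}(x)`, where the overlap
is given by its explicit formula. -/
theorem fbi_reconstruction_gaussian
    {d : ℕ} (ε : ℝ) (hε : 0 < ε)
    (q₀ p₀ : EuclideanSpace ℝ (Fin d)) (x : EuclideanSpace ℝ (Fin d)) :
    (((2 * Real.pi * ε) ^ d : ℝ)⁻¹ : ℂ) *
      ∫ z : EuclideanSpace ℝ (Fin d) × EuclideanSpace ℝ (Fin d),
        Complex.exp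
          ((((-(1 / (4 * ε)) * (‖z.1 - q₀‖ ^ 2 + ‖z.2 - p₀‖ ^ 2) : ℝ)) : ℂ) +
            Complex.I / (2 * (ε : ℂ)) * ((inner ℝ (z.2 + p₀) (z.1 - q₀) : ℝ) : ℂ)) *
          gaussWP ε z.1 z.2 x
      = gaussWP ε q₀ p₀ x := by
  have hb4 : (0 : ℝ) < (4 * ε)⁻¹ := by positivity
  have hbe : (0 : ℝ) < ε⁻¹ := by positivity
  -- Step 1: combine the two exponentials.
  have hstep1 : ∀ z : EuclideanSpace ℝ (Fin d) × EuclideanSpace ℝ (Fin d),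
      Complex.exp
          ((((-(1 / (4 * ε)) * (‖z.1 - q₀‖ ^ 2 + ‖z.2 - p₀‖ ^ 2) : ℝ)) : ℂ) +
            Complex.I / (2 * (ε : ℂ)) * ((inner ℝ (z.2 + p₀) (z.1 - q₀) : ℝ) : ℂ)) *
          gaussWP ε z.1 z.2 x
        = (((Real.pi * ε) ^ (-(d : ℝ) / 4) : ℝ) : ℂ) * Complex.exp (fbiPhi ε q₀ p₀ x z) := by
    intro z
    rw [gaussWP, mul_left_comm, ← Complex.exp_add]
    congr 2
    simp only [fbiPhi]
    push_cast
    ring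
  simp only [hstep1]
  rw [integral_const_mul]
  -- Step 2: the exponent after translation by `(q₀, p₀)`, as a Gaussian in the
  -- second variable.
  have hΦeq : ∀ y u : EuclideanSpace ℝ (Fin d),
      fbiPhi ε q₀ p₀ x ((y, u) + (q₀, p₀))
        = (-(((4 * ε)⁻¹ : ℝ) : ℂ) * (‖u‖ : ℂ) ^ 2
            + Complex.I / (ε : ℂ) *
              ((inner ℝ (x - (y + q₀) + (2⁻¹ : ℝ) • y) u : ℝ) : ℂ))
          + (((-(1 / (4 * ε)) * ‖y‖ ^ 2 - ‖x - (y + q₀)‖ ^ 2 / (2 * ε) : ℝ) : ℂ)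
            + ((((inner ℝ p₀ y : ℝ) + (inner ℝ p₀ (x - (y + q₀)) : ℝ)) / ε : ℝ) : ℂ)
              * Complex.I) := by
    intro y u
    simp only [fbiPhi, Prod.mk_add_mk, add_sub_cancel_right]
    simp only [inner_add_left, inner_sub_left, inner_add_right, inner_sub_right,
      real_inner_smul_left, real_inner_smul_right]
    rw [real_inner_comm x u, real_inner_comm y u, real_inner_comm q₀ u]
    push_cast
    ring
  -- Integrability of the translated integrand.
  have hg : Integrable (fun v : EuclideanSpace ℝ (Fin d) =>
      Complex.exp (-((((4 * ε)⁻¹ : ℝ)) : ℂ) * (‖v‖ : ℂ) ^ 2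
        + (0 : ℂ) * ((inner ℝ (0 : EuclideanSpace ℝ (Fin d)) v : ℝ) : ℂ))) :=
    GaussianFourier.integrable_cexp_neg_mul_sq_norm_add (by simpa using hb4) 0 0
  have hInt : Integrable
      (fun z : EuclideanSpace ℝ (Fin d) × EuclideanSpace ℝ (Fin d) =>
        Complex.exp (fbiPhi ε q₀ p₀ x (z + (q₀, p₀)))) (volume.prod volume) := by
    refine ((hg.mul_prod hg).norm).mono' ?_ (Filter.Eventually.of_forall fun z => ?_)
    · have hc : Continuous (fun z : EuclideanSpace ℝ (Fin d) × EuclideanSpace ℝ (Fin d) =>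
          fbiPhi ε q₀ p₀ x (z + (q₀, p₀))) := by
        unfold fbiPhi
        refine Continuous.add (Complex.continuous_ofReal.comp ?_)
          (Continuous.mul (Complex.continuous_ofReal.comp ?_) continuous_const)
        · fun_prop
        · refine Continuous.add (Continuous.div_const ?_ _) (Continuous.div_const ?_ _)
          · exact Continuous.inner (by fun_prop) (by fun_prop)
          · exact Continuous.inner (by fun_prop) (by fun_prop)
      exact (Complex.continuous_exp.comp hc).aestronglyMeasurable
    · rw [norm_mul]
      simp only [Complex.norm_exp]
      rw [← Real.exp_add, Real.exp_le_exp]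
      simp only [fbiPhi, Prod.fst_add, Prod.snd_add, add_sub_cancel_right,
        ← Complex.ofReal_pow, ← Complex.ofReal_mul, ← Complex.ofReal_neg,
        Complex.add_re, Complex.ofReal_re, Complex.mul_re, Complex.ofReal_im,
        Complex.I_re, Complex.I_im, mul_zero, zero_mul, add_zero, mul_one, sub_zero,
        zero_sub, neg_zero]
      have h5 : (0 : ℝ) ≤ ‖x - (z.1 + q₀)‖ ^ 2 / (2 * ε) := by positivity
      rw [one_div]
      ring_nf
      nlinarith [h5]
  -- Step 3: translation and Fubini.
  haveI : ((volume : Measure (EuclideanSpace ℝ (Fin d))).prod volume).IsAddRightInvariant :=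
    Measure.prod.instIsAddRightInvariant (μ := (volume : Measure (EuclideanSpace ℝ (Fin d))))
      (ν := (volume : Measure (EuclideanSpace ℝ (Fin d))))
  rw [Measure.volume_eq_prod,
    ← integral_add_right_eq_self (μ := (volume : Measure (EuclideanSpace ℝ (Fin d))).prod volume)
      (fun z => Complex.exp (fbiPhi ε q₀ p₀ x z)) (q₀, p₀),
    integral_prod _ hInt]
  simp only [hΦeq]
  -- Step 4: inner Gaussian integral (over the momentum variable).
  simp_rw [fbi_gauss_aux hb4]
  rw [integral_const_mul]
  -- Step 5: rewrite the resulting exponent as a Gaussian in the position variable.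
  have hKeq : ∀ y : EuclideanSpace ℝ (Fin d),
      (Complex.I / (ε : ℂ)) ^ 2 * ((‖x - (y + q₀) + (2⁻¹ : ℝ) • y‖ : ℂ)) ^ 2
          / (4 * (((4 * ε)⁻¹ : ℝ) : ℂ))
        + (((-(1 / (4 * ε)) * ‖y‖ ^ 2 - ‖x - (y + q₀)‖ ^ 2 / (2 * ε) : ℝ) : ℂ)
            + ((((inner ℝ p₀ y : ℝ) + (inner ℝ p₀ (x - (y + q₀)) : ℝ)) / ε : ℝ) : ℂ)
              * Complex.I)
        = (-((ε⁻¹ : ℝ) : ℂ) * (‖y‖ : ℂ) ^ 2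
            + (2 / (ε : ℂ)) * ((inner ℝ (x - q₀) y : ℝ) : ℂ))
          + (((-(3 / (2 * ε)) * ‖x - q₀‖ ^ 2 : ℝ) : ℂ)
            + (((inner ℝ p₀ (x - q₀) : ℝ) / ε : ℝ) : ℂ) * Complex.I) := by
    intro y
    rw [show x - (y + q₀) = x - q₀ - y by abel, div_pow, Complex.I_sq]
    simp only [← Complex.ofReal_pow]
    simp only [norm_add_sq_real, norm_sub_sq_real, inner_sub_left, inner_sub_right,
      real_inner_smul_right, real_inner_self_eq_norm_sq, norm_smul, Real.norm_eq_abs,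
      abs_inv, abs_two]
    push_cast
    rw [show (4 : ℂ) * (4 * (ε : ℂ))⁻¹ = ((ε : ℂ))⁻¹ by
      rw [mul_inv, ← mul_assoc]; norm_num]
    simp only [div_eq_mul_inv, inv_inv]
    have hx : (ε : ℂ) * ((ε : ℂ))⁻¹ ^ 2 = ((ε : ℂ))⁻¹ := by
      have hε' : (ε : ℂ) ≠ 0 := by exact_mod_cast hε.ne'
      rw [sq, ← mul_assoc, mul_inv_cancel₀ hε', one_mul]
    ring_nf
    simp only [hx]
    ring
  simp only [hKeq]
  rw [fbi_gauss_aux hbe]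
  -- Step 6: identify the remaining exponential with the one of `gaussWP`.
  have hexp : Complex.exp ((2 / (ε : ℂ)) ^ 2 * ((‖x - q₀‖ : ℂ)) ^ 2 / (4 * ((ε⁻¹ : ℝ) : ℂ))
        + (((-(3 / (2 * ε)) * ‖x - q₀‖ ^ 2 : ℝ) : ℂ)
            + (((inner ℝ p₀ (x - q₀) : ℝ) / ε : ℝ) : ℂ) * Complex.I))
      = Complex.exp (((-(‖x - q₀‖ ^ 2) / (2 * ε) : ℝ) : ℂ)
          + Complex.I / (ε : ℂ) * ((inner ℝ p₀ (x - q₀) : ℝ) : ℂ)) := by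
    congr 1
    have hε' : (ε : ℂ) ≠ 0 := by exact_mod_cast hε.ne'
    push_cast
    field_simp
    ring
  rw [hexp, gaussWP]
  -- Step 7: the constants combine to one.
  have hscal : (((2 * Real.pi * ε) ^ d : ℝ)⁻¹ : ℂ) *
      (((Real.pi : ℂ) / (((4 * ε)⁻¹ : ℝ) : ℂ)) ^ ((d : ℂ) / 2) *
        ((Real.pi : ℂ) / ((ε⁻¹ : ℝ) : ℂ)) ^ ((d : ℂ) / 2)) = 1 := by
    have h1 : ((Real.pi : ℂ) / (((4 * ε)⁻¹ : ℝ) : ℂ)) = ((Real.pi * (4 * ε) : ℝ) : ℂ) := by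
      push_cast; simp only [div_eq_mul_inv, inv_inv]
    have h2 : ((Real.pi : ℂ) / ((ε⁻¹ : ℝ) : ℂ)) = ((Real.pi * ε : ℝ) : ℂ) := by
      push_cast; simp only [div_eq_mul_inv, inv_inv]
    have he : ((d : ℂ) / 2) = (((d : ℝ) / 2 : ℝ) : ℂ) := by push_cast; ring
    rw [h1, h2, he, ← Complex.ofReal_cpow (by positivity) ((d : ℝ) / 2),
      ← Complex.ofReal_cpow (by positivity) ((d : ℝ) / 2),
      ← Complex.ofReal_mul, ← Complex.ofReal_inv, ← Complex.ofReal_mul]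
    rw [show (1 : ℂ) = ((1 : ℝ) : ℂ) by norm_num, Complex.ofReal_inj]
    rw [← Real.mul_rpow (by positivity) (by positivity),
      show (Real.pi * (4 * ε)) * (Real.pi * ε) = (2 * Real.pi * ε) ^ 2 by ring,
      ← Real.rpow_natCast (2 * Real.pi * ε) 2,
      ← Real.rpow_mul (by positivity),
      show ((2 : ℕ) : ℝ) * ((d : ℝ) / 2) = (d : ℝ) by push_cast; ring,
      Real.rpow_natCast]
    exact inv_mul_cancel₀ (by positivity)
  linear_combination ((((Real.pi * ε) ^ (-(d : ℝ) / 4) : ℝ) : ℂ) *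
    Complex.exp (((-(‖x - q₀‖ ^ 2) / (2 * ε) : ℝ) : ℂ)
      + Complex.I / (ε : ℂ) * ((inner ℝ p₀ (x - q₀) : ℝ) : ℂ))) * hscal
end

section
/- Let ε > 0 and z₁ = (q₁, p₁), z₂ = (q₂, p₂) ∈ ℝ^d × ℝ^d. Then the matrix element of the harmonic oscillator potential between two Gaussian wave packets satisfies ∫_{ℝ^d} conj(g^ε_{z₁}(x)) · (|x|²/2) · g^ε_{z₂}(x) dx = [ ∑_{k=1}^d (1/8) ( 2ε − ( (p₁ₖ − p₂ₖ) + i (q₁ₖ + q₂ₖ) )² ) ] · ⟨g^ε_{z₁}, g^ε_{z₂}⟩. -/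
open MeasureTheory

open Real Filter Set


lemma aux_re_quadratic (b c d : ℂ) (x : ℝ) :
    (b * (x:ℂ) ^ 2 + c * x + d).re = b.re * x ^ 2 + c.re * x + d.re := by
  simp [Complex.add_re, Complex.mul_re, ← Complex.ofReal_pow]

lemma aux_norm_cexp_quadratic (b c d : ℂ) (x : ℝ) :
    ‖Complex.exp (b * x ^ 2 + c * x + d)‖ =
      Real.exp (b.re * x ^ 2 + c.re * x + d.re) := by
  rw [Complex.norm_exp, aux_re_quadratic]

lemma aux_integrable_pow_mul_cexp {b : ℂ} (hb : b.re < 0) (n : ℕ) (c d : ℂ) :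
    Integrable fun x : ℝ ↦ (x : ℂ) ^ n * Complex.exp (b * x ^ 2 + c * x + d) := by
  have hb2 : (b / 2).re < 0 := by
    have : (b / 2).re = b.re / 2 := by
      rw [Complex.div_re]
      simp [Complex.normSq_apply]
      ring
    rw [this]; linarith
  have hint : Integrable fun x : ℝ ↦ Complex.exp (b / 2 * x ^ 2 + c * x + d) :=
    integrable_cexp_quadratic' hb2 c d
  have key : (fun x : ℝ ↦ (x : ℂ) ^ n * Complex.exp (b * x ^ 2 + c * x + d)) =
      fun x : ℝ ↦ ((x : ℂ) ^ n * Complex.exp (b / 2 * x ^ 2 + 0 * x + 0)) *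
        Complex.exp (b / 2 * x ^ 2 + c * x + d) := by
    funext x
    rw [mul_assoc, ← Complex.exp_add]
    ring_nf
  rw [key]
  apply hint.bdd_mul (c := Real.exp ((n : ℝ) ^ 2 / (4 * (-(b.re / 2)))))
  · apply Continuous.aestronglyMeasurable
    fun_prop
  · refine Filter.Eventually.of_forall fun x ↦ ?_
    rw [norm_mul, norm_pow, aux_norm_cexp_quadratic, Complex.norm_real]
    set a : ℝ := -(b.re / 2) with ha
    have ha0 : 0 < a := by simp only [ha]; linarith
    have h1 : ‖x‖ ^ n ≤ Real.exp (n * |x|) := by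
      rw [Real.norm_eq_abs]
      calc |x| ^ n ≤ Real.exp |x| ^ n :=
            pow_le_pow_left₀ (abs_nonneg x)
              (le_trans (le_add_of_nonneg_left zero_le_one)
                (by linarith [Real.add_one_le_exp |x|])) n
        _ = Real.exp (n * |x|) := by rw [← Real.exp_nat_mul]
    have hre2 : (b / 2).re = -a := by simp only [ha]; rw [Complex.div_ofNat_re]; ring
    rw [hre2]
    have h2 : Real.exp (n * |x|) * Real.exp (-a * x ^ 2 + (0:ℂ).re * x + (0:ℂ).re) ≤
        Real.exp ((n:ℝ) ^ 2 / (4 * a)) := by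
      rw [← Real.exp_add, Real.exp_le_exp, Complex.zero_re]
      have hx2 : x ^ 2 = |x| ^ 2 := (sq_abs x).symm
      rw [hx2]
      rw [le_div_iff₀ (by positivity)]
      nlinarith [sq_nonneg (2 * a * |x| - n), abs_nonneg x]
    calc ‖x‖ ^ n * Real.exp (-a * x ^ 2 + (0:ℂ).re * x + (0:ℂ).re)
        ≤ Real.exp (n * |x|) * Real.exp (-a * x ^ 2 + (0:ℂ).re * x + (0:ℂ).re) := by
          apply mul_le_mul_of_nonneg_right h1 (Real.exp_nonneg _)
      _ ≤ Real.exp ((n:ℝ) ^ 2 / (4 * a)) := h2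

lemma aux_tendsto_exp_quad {a : ℝ} (ha : a < 0) (b' c' : ℝ) :
    Tendsto (fun x : ℝ ↦ Real.exp (a * x ^ 2 + b' * x + c')) atTop (nhds 0) := by
  have h1 : Tendsto (fun x : ℝ ↦ a * x ^ 2 + b' * x + c') atTop atBot := by
    have h2 : Tendsto (fun x : ℝ ↦ a * x + b') atTop atBot :=
      tendsto_atBot_add_const_right _ b' (tendsto_id.const_mul_atTop_of_neg ha)
    have h3 : Tendsto (fun x : ℝ ↦ x * (a * x + b')) atTop atBot :=
      Tendsto.atTop_mul_atBot₀ tendsto_id h2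
    have h4 := tendsto_atBot_add_const_right _ c' h3
    refine h4.congr fun x ↦ by ring
  exact Real.tendsto_exp_atBot.comp h1

lemma aux_tendsto_pow_cexp_atTop {b : ℂ} (hb : b.re < 0) (n : ℕ) (c d : ℂ) :
    Tendsto (fun x : ℝ ↦ (x : ℂ) ^ n * Complex.exp (b * x ^ 2 + c * x + d))
      atTop (nhds 0) := by
  refine squeeze_zero_norm'
    (a := fun x : ℝ ↦ Real.exp (b.re * x ^ 2 + (c.re + n) * x + d.re)) ?_ ?_
  · filter_upwards [eventually_ge_atTop (1 : ℝ)] with x hx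
    rw [norm_mul, norm_pow, Complex.norm_real, aux_norm_cexp_quadratic]
    have h1 : ‖x‖ ^ n ≤ Real.exp ((n : ℝ) * x) := by
      rw [Real.norm_eq_abs, abs_of_pos (by linarith)]
      calc x ^ n ≤ Real.exp x ^ n :=
            pow_le_pow_left₀ (by linarith)
              (le_trans (by linarith) (by linarith [Real.add_one_le_exp x])) n
        _ = Real.exp (n * x) := by rw [← Real.exp_nat_mul]
    calc ‖x‖ ^ n * Real.exp (b.re * x ^ 2 + c.re * x + d.re)
        ≤ Real.exp ((n:ℝ) * x) * Real.exp (b.re * x ^ 2 + c.re * x + d.re) :=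
          mul_le_mul_of_nonneg_right h1 (Real.exp_nonneg _)
      _ = Real.exp (b.re * x ^ 2 + (c.re + n) * x + d.re) := by
          rw [← Real.exp_add]; ring_nf
  · exact aux_tendsto_exp_quad hb _ _

lemma aux_tendsto_pow_cexp_atBot {b : ℂ} (hb : b.re < 0) (n : ℕ) (c d : ℂ) :
    Tendsto (fun x : ℝ ↦ (x : ℂ) ^ n * Complex.exp (b * x ^ 2 + c * x + d))
      atBot (nhds 0) := by
  have h1 := aux_tendsto_pow_cexp_atTop hb n (-c) d
  have h2 : Tendsto
      (fun x : ℝ ↦ ((-x : ℝ) : ℂ) ^ n * Complex.exp (b * x ^ 2 + c * x + d))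
      atBot (nhds 0) := by
    refine (h1.comp tendsto_neg_atBot_atTop).congr fun x ↦ ?_
    simp only [Function.comp_apply]
    push_cast
    ring_nf
  have h3 := h2.const_mul ((-1 : ℂ) ^ n)
  rw [mul_zero] at h3
  refine h3.congr fun x ↦ ?_
  push_cast
  rw [neg_pow]
  ring_nf
  rw [mul_comm n 2, pow_mul]
  norm_num

lemma aux_hasDerivAt_quad_c (b c d w : ℂ) :
    HasDerivAt (fun y : ℂ ↦ b * y ^ 2 + c * y + d) (2 * b * w + c) w := by
  have hp : HasDerivAt (fun y : ℂ ↦ y ^ 2) (2 * w) w := by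
    simpa using hasDerivAt_pow 2 w
  have := ((hp.const_mul b).add ((hasDerivAt_id w).const_mul c)).add_const d
  refine this.congr_deriv ?_
  ring

lemma aux_hasDerivAt_cexp_quad (b c d : ℂ) (x : ℝ) :
    HasDerivAt (fun y : ℝ ↦ Complex.exp (b * y ^ 2 + c * y + d))
      ((2 * b * x + c) * Complex.exp (b * x ^ 2 + c * x + d)) x := by
  have h1 := ((aux_hasDerivAt_quad_c b c d (x : ℂ)).cexp).comp_ofReal
  simpa [mul_comm] using h1

lemma aux_integral_deriv_zero {f f' : ℝ → ℂ} (hd : ∀ x, HasDerivAt f (f' x) x)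
    (hi : Integrable f') (ht : Tendsto f atTop (nhds 0))
    (hb : Tendsto f atBot (nhds 0)) : ∫ x : ℝ, f' x = 0 := by
  rw [← intervalIntegral.integral_Iic_add_Ioi (b := 0) hi.integrableOn hi.integrableOn,
    MeasureTheory.integral_Ioi_of_hasDerivAt_of_tendsto' (fun x _ ↦ hd x)
      hi.integrableOn ht,
    MeasureTheory.integral_Iic_of_hasDerivAt_of_tendsto' (fun x _ ↦ hd x)
      hi.integrableOn hb]
  ring

lemma aux_cexp_eq_pow_zero (b c d : ℂ) :
    (fun x : ℝ ↦ Complex.exp (b * x ^ 2 + c * x + d)) =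
      fun x : ℝ ↦ (x : ℂ) ^ 0 * Complex.exp (b * x ^ 2 + c * x + d) := by
  funext x; simp

lemma aux_integral_mul_cexp {b : ℂ} (hb : b.re < 0) (c d : ℂ) :
    ∫ x : ℝ, (x : ℂ) * Complex.exp (b * x ^ 2 + c * x + d) =
      -(c / (2 * b)) * ∫ x : ℝ, Complex.exp (b * x ^ 2 + c * x + d) := by
  have hb0 : b ≠ 0 := by intro h; rw [h] at hb; simp at hb
  have hi0 : Integrable fun x : ℝ ↦ Complex.exp (b * x ^ 2 + c * x + d) :=
    integrable_cexp_quadratic' hb c d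
  have hi1 : Integrable fun x : ℝ ↦ (x : ℂ) * Complex.exp (b * x ^ 2 + c * x + d) := by
    simpa using aux_integrable_pow_mul_cexp hb 1 c d
  have hider : Integrable fun x : ℝ ↦ (2 * b * x + c) * Complex.exp (b * x ^ 2 + c * x + d) := by
    have : (fun x : ℝ ↦ (2 * b * x + c) * Complex.exp (b * x ^ 2 + c * x + d)) =
        fun x : ℝ ↦ 2 * b * ((x : ℂ) * Complex.exp (b * x ^ 2 + c * x + d)) +
          c * Complex.exp (b * x ^ 2 + c * x + d) := by
      funext x; ring
    rw [this]
    exact (hi1.const_mul _).add (hi0.const_mul _)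
  have h0 : ∫ x : ℝ, (2 * b * x + c) * Complex.exp (b * x ^ 2 + c * x + d) = 0 := by
    apply aux_integral_deriv_zero (aux_hasDerivAt_cexp_quad b c d) hider
    · rw [aux_cexp_eq_pow_zero b c d]; exact aux_tendsto_pow_cexp_atTop hb 0 c d
    · rw [aux_cexp_eq_pow_zero b c d]; exact aux_tendsto_pow_cexp_atBot hb 0 c d
  have hsplit : ∫ x : ℝ, (2 * b * x + c) * Complex.exp (b * x ^ 2 + c * x + d) =
      2 * b * (∫ x : ℝ, (x : ℂ) * Complex.exp (b * x ^ 2 + c * x + d)) +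
        c * ∫ x : ℝ, Complex.exp (b * x ^ 2 + c * x + d) := by
    rw [← integral_const_mul, ← integral_const_mul, ← integral_add
      (hi1.const_mul _) (hi0.const_mul _)]
    congr 1; funext x; ring
  rw [hsplit] at h0
  have h2b : (2 * b : ℂ) ≠ 0 := by simp [hb0]
  apply mul_left_cancel₀ h2b
  rw [show 2 * b * (-(c / (2 * b)) * ∫ x : ℝ, Complex.exp (b * ↑x ^ 2 + c * ↑x + d)) =
    -(c * ∫ x : ℝ, Complex.exp (b * ↑x ^ 2 + c * ↑x + d)) by field_simp]
  linear_combination h0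

lemma aux_integral_sq_mul_cexp {b : ℂ} (hb : b.re < 0) (c d : ℂ) :
    ∫ x : ℝ, (x : ℂ) ^ 2 * Complex.exp (b * x ^ 2 + c * x + d) =
      (c ^ 2 / (4 * b ^ 2) - 1 / (2 * b)) *
        ∫ x : ℝ, Complex.exp (b * x ^ 2 + c * x + d) := by
  have hb0 : b ≠ 0 := by intro h; rw [h] at hb; simp at hb
  have hi0 : Integrable fun x : ℝ ↦ Complex.exp (b * x ^ 2 + c * x + d) :=
    integrable_cexp_quadratic' hb c d
  have hi1 : Integrable fun x : ℝ ↦ (x : ℂ) * Complex.exp (b * x ^ 2 + c * x + d) := by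
    simpa using aux_integrable_pow_mul_cexp hb 1 c d
  have hi2 : Integrable fun x : ℝ ↦ (x : ℂ) ^ 2 * Complex.exp (b * x ^ 2 + c * x + d) :=
    aux_integrable_pow_mul_cexp hb 2 c d
  have hder : ∀ x : ℝ, HasDerivAt (fun y : ℝ ↦ (y : ℂ) * Complex.exp (b * y ^ 2 + c * y + d))
      ((2 * b * x ^ 2 + c * x + 1) * Complex.exp (b * x ^ 2 + c * x + d)) x := by
    intro x
    have hc : HasDerivAt (fun w : ℂ ↦ w * Complex.exp (b * w ^ 2 + c * w + d))
        ((x : ℂ) * ((2 * b * x + c) * Complex.exp (b * (x:ℂ) ^ 2 + c * x + d)) +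
          Complex.exp (b * (x:ℂ) ^ 2 + c * x + d)) (x : ℂ) := by
      have := (hasDerivAt_id ((x:ℝ) : ℂ)).mul ((aux_hasDerivAt_quad_c b c d (x : ℂ)).cexp)
      refine this.congr_deriv ?_
      simp only [id]
      ring
    have := hc.comp_ofReal
    convert this using 1
    ring
  have hider : Integrable fun x : ℝ ↦
      (2 * b * x ^ 2 + c * x + 1) * Complex.exp (b * x ^ 2 + c * x + d) := by
    have : (fun x : ℝ ↦ (2 * b * x ^ 2 + c * x + 1) * Complex.exp (b * x ^ 2 + c * x + d)) =
        fun x : ℝ ↦ 2 * b * ((x : ℂ) ^ 2 * Complex.exp (b * x ^ 2 + c * x + d)) +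
          (c * ((x : ℂ) * Complex.exp (b * x ^ 2 + c * x + d)) +
            Complex.exp (b * x ^ 2 + c * x + d)) := by
      funext x; ring
    rw [this]
    exact (hi2.const_mul _).add ((hi1.const_mul _).add hi0)
  have h0 : ∫ x : ℝ, (2 * b * x ^ 2 + c * x + 1) * Complex.exp (b * x ^ 2 + c * x + d) = 0 := by
    apply aux_integral_deriv_zero hder hider
    · simpa using aux_tendsto_pow_cexp_atTop hb 1 c d
    · simpa using aux_tendsto_pow_cexp_atBot hb 1 c d
  have hsplit : ∫ x : ℝ, (2 * b * x ^ 2 + c * x + 1) * Complex.exp (b * x ^ 2 + c * x + d) =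
      2 * b * (∫ x : ℝ, (x : ℂ) ^ 2 * Complex.exp (b * x ^ 2 + c * x + d)) +
        (c * (∫ x : ℝ, (x : ℂ) * Complex.exp (b * x ^ 2 + c * x + d)) +
          ∫ x : ℝ, Complex.exp (b * x ^ 2 + c * x + d)) := by
    calc ∫ x : ℝ, (2 * b * x ^ 2 + c * x + 1) * Complex.exp (b * x ^ 2 + c * x + d)
        = ∫ x : ℝ, (2 * b * ((x : ℂ) ^ 2 * Complex.exp (b * x ^ 2 + c * x + d)) +
            (c * ((x : ℂ) * Complex.exp (b * x ^ 2 + c * x + d)) +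
              Complex.exp (b * x ^ 2 + c * x + d))) := by
          congr 1; funext x; ring
      _ = _ := by
          have hg : Integrable (fun x : ℝ ↦ c * ((x : ℂ) * Complex.exp (b * x ^ 2 + c * x + d)) +
              Complex.exp (b * x ^ 2 + c * x + d)) := (hi1.const_mul _).add hi0
          rw [integral_add (hi2.const_mul _) hg,
            integral_add (hi1.const_mul _) hi0, integral_const_mul, integral_const_mul]
  rw [hsplit, aux_integral_mul_cexp hb c d] at h0
  have h2b : (2 * b : ℂ) ≠ 0 := by simp [hb0]
  apply mul_left_cancel₀ h2b
  rw [show 2 * b * ((c ^ 2 / (4 * b ^ 2) - 1 / (2 * b)) *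
      ∫ x : ℝ, Complex.exp (b * ↑x ^ 2 + c * ↑x + d)) =
    (c * (c / (2 * b)) - 1) * ∫ x : ℝ, Complex.exp (b * ↑x ^ 2 + c * ↑x + d) by
      field_simp; ring]
  linear_combination h0

noncomputable def auxB (ε : ℝ) : ℂ := ((-(1/ε) : ℝ) : ℂ)
noncomputable def auxC (ε a1 a2 b1 b2 : ℝ) : ℂ :=
  (((a1 + a2)/ε : ℝ) : ℂ) + Complex.I * (((b2 - b1)/ε : ℝ) : ℂ)
noncomputable def auxD (ε a1 a2 b1 b2 : ℝ) : ℂ :=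
  ((-(a1^2 + a2^2)/(2*ε) : ℝ) : ℂ) + Complex.I * (((b1*a1 - b2*a2)/ε : ℝ) : ℂ)
noncomputable def auxE (ε a1 a2 b1 b2 : ℝ) (t : ℝ) : ℂ :=
  Complex.exp (auxB ε * t^2 + auxC ε a1 a2 b1 b2 * t + auxD ε a1 a2 b1 b2)

lemma aux_norm_sq_eq {d : ℕ} (v : EuclideanSpace ℝ (Fin d)) :
    ‖v‖ ^ 2 = ∑ k, v k ^ 2 := by
  rw [← real_inner_self_eq_norm_sq, PiLp.inner_apply]
  exact Finset.sum_congr rfl fun k _ ↦ by simp [RCLike.inner_apply, sq]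

lemma aux_inner_eq {d : ℕ} (p v : EuclideanSpace ℝ (Fin d)) :
    (inner ℝ p v : ℝ) = ∑ k, p k * v k := by
  rw [PiLp.inner_apply]
  exact Finset.sum_congr rfl fun k _ ↦ by simp [RCLike.inner_apply, mul_comm]

lemma aux_pointwise {d : ℕ} {ε : ℝ} (hε : 0 < ε)
    (q₁ p₁ q₂ p₂ x : EuclideanSpace ℝ (Fin d)) :
    (starRingEnd ℂ) (gaussWP ε q₁ p₁ x) * gaussWP ε q₂ p₂ x =
      (((Real.pi * ε) ^ (-(d : ℝ) / 4) : ℝ) : ℂ) ^ 2 *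
        ∏ k, auxE ε (q₁ k) (q₂ k) (p₁ k) (p₂ k) (x k) := by
  have hε0 : (ε : ℂ) ≠ 0 := Complex.ofReal_ne_zero.mpr hε.ne'
  unfold gaussWP
  rw [map_mul]
  rw [← Complex.exp_conj]
  simp only [map_add, map_mul, map_div₀, Complex.conj_ofReal, Complex.conj_I]
  rw [mul_mul_mul_comm, ← Complex.exp_add, ← sq]
  congr 1
  unfold auxE
  rw [← Complex.exp_sum]
  congr 1
  have h1 : ‖x - q₁‖ ^ 2 = ∑ k, (x k - q₁ k) ^ 2 := by
    rw [aux_norm_sq_eq]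
    exact Finset.sum_congr rfl fun k _ ↦ by simp [PiLp.sub_apply]
  have h2 : ‖x - q₂‖ ^ 2 = ∑ k, (x k - q₂ k) ^ 2 := by
    rw [aux_norm_sq_eq]
    exact Finset.sum_congr rfl fun k _ ↦ by simp [PiLp.sub_apply]
  have h3 : (inner ℝ p₁ (x - q₁) : ℝ) = ∑ k, p₁ k * (x k - q₁ k) := by
    rw [aux_inner_eq]
    exact Finset.sum_congr rfl fun k _ ↦ by simp [PiLp.sub_apply]
  have h4 : (inner ℝ p₂ (x - q₂) : ℝ) = ∑ k, p₂ k * (x k - q₂ k) := by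
    rw [aux_inner_eq]
    exact Finset.sum_congr rfl fun k _ ↦ by simp [PiLp.sub_apply]
  rw [h1, h2, h3, h4]
  unfold auxB auxC auxD
  push_cast
  simp only [neg_mul, neg_div, Finset.sum_div, Finset.mul_sum, ← Finset.sum_neg_distrib,
    ← Finset.sum_add_distrib]
  refine Finset.sum_congr rfl fun k _ ↦ ?_
  field_simp
  ring

lemma aux_integrable_pow_mul_E {b : ℂ} (hb : b.re < 0) (c dd : ℂ) (n : ℕ) :
    Integrable fun t : ℝ ↦ (t : ℂ) ^ n * Complex.exp (b * t ^ 2 + c * t + dd) :=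
  aux_integrable_pow_mul_cexp hb n c dd

lemma aux_prod_if_eq {d : ℕ} (k : Fin d) (A : ℂ) (B : Fin d → ℂ) :
    ∏ j : Fin d, (if j = k then A * B k else B j) = A * ∏ j : Fin d, B j := by
  rw [← Finset.mul_prod_erase Finset.univ _ (Finset.mem_univ k),
    ← Finset.mul_prod_erase Finset.univ B (Finset.mem_univ k), if_pos rfl]
  rw [Finset.prod_congr rfl (fun j hj ↦ if_neg (Finset.mem_erase.mp hj).1)]
  ring

set_option maxHeartbeats 2000000 in
lemma aux_main_pi {d : ℕ} {b : ℂ} (hb : b.re < 0) (c dd : Fin d → ℂ) (C2 : ℂ) :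
    (∫ y : Fin d → ℝ, ∑ k : Fin d, ((y k : ℂ) ^ 2 / 2) *
        (C2 * ∏ j : Fin d, Complex.exp (b * (y j) ^ 2 + c j * (y j) + dd j)))
      = (∑ k : Fin d, (c k ^ 2 / (8 * b ^ 2) - 1 / (4 * b))) *
        ∫ y : Fin d → ℝ, C2 * ∏ j : Fin d,
          Complex.exp (b * (y j) ^ 2 + c j * (y j) + dd j) := by
  classical
  have hb0 : b ≠ 0 := by intro h; rw [h] at hb; simp at hb
  set E : Fin d → ℝ → ℂ := fun j t ↦ Complex.exp (b * t ^ 2 + c j * t + dd j) with hE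
  set f : Fin d → Fin d → ℝ → ℂ := fun k j t ↦
    if j = k then (1/2 : ℂ) * ((t : ℂ) ^ 2 * E j t) else E j t with hf
  have hiE : ∀ (j : Fin d) (n : ℕ), Integrable fun t : ℝ ↦ (t : ℂ) ^ n * E j t :=
    fun j n ↦ aux_integrable_pow_mul_cexp hb n (c j) (dd j)
  have hiE0 : ∀ j : Fin d, Integrable (E j) := fun j ↦ by
    have := hiE j 0; simpa using this
  have hif : ∀ k j : Fin d, Integrable (f k j) := by
    intro k j
    by_cases h : j = k
    · subst h
      have hfj : f j j = fun t : ℝ ↦ (1/2 : ℂ) * ((t : ℂ) ^ 2 * E j t) := by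
        funext t; simp [hf]
      rw [hfj]
      exact (hiE j 2).const_mul _
    · simp only [hf, if_neg h]
      exact hiE0 j
  have hptw : ∀ (k : Fin d) (y : Fin d → ℝ),
      ((y k : ℂ) ^ 2 / 2) * (C2 * ∏ j : Fin d, E j (y j)) =
        C2 * ∏ j : Fin d, f k j (y j) := by
    intro k y
    rw [← Finset.mul_prod_erase Finset.univ (fun j ↦ f k j (y j)) (Finset.mem_univ k),
      ← Finset.mul_prod_erase Finset.univ (fun j ↦ E j (y j)) (Finset.mem_univ k)]
    rw [Finset.prod_congr rfl
      (fun j hj ↦ show f k j (y j) = E j (y j) by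
        simp only [hf, if_neg (Finset.mem_erase.mp hj).1])]
    simp only [hf, if_pos rfl]
    ring
  have hfval : ∀ k j : Fin d, (∫ t : ℝ, f k j t) =
      if j = k then ((c k ^ 2 / (8 * b ^ 2) - 1 / (4 * b)) * ∫ t : ℝ, E k t)
        else ∫ t : ℝ, E j t := by
    intro k j
    by_cases h : j = k
    · subst h
      simp only [hf, eq_self_iff_true, if_true]
      rw [integral_const_mul]
      simp only [hE]
      rw [aux_integral_sq_mul_cexp hb (c j) (dd j)]
      ring
    · simp only [hf, if_neg h]
  calc (∫ y : Fin d → ℝ, ∑ k : Fin d, ((y k : ℂ) ^ 2 / 2) *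
          (C2 * ∏ j : Fin d, E j (y j)))
      = ∫ y : Fin d → ℝ, ∑ k : Fin d, C2 * ∏ j : Fin d, f k j (y j) := by
        congr 1; funext y
        exact Finset.sum_congr rfl fun k _ ↦ hptw k y
    _ = ∑ k : Fin d, ∫ y : Fin d → ℝ, C2 * ∏ j : Fin d, f k j (y j) := by
        refine integral_finset_sum Finset.univ fun k _ ↦ ?_
        exact (Integrable.fintype_prod (f := fun j t ↦ f k j t) fun j ↦ hif k j).const_mul C2
    _ = ∑ k : Fin d, C2 * ∏ j : Fin d, ∫ t : ℝ, f k j t := by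
        refine Finset.sum_congr rfl fun k _ ↦ ?_
        rw [integral_const_mul, integral_fintype_prod_volume_eq_prod (f := fun j t ↦ f k j t)]
    _ = ∑ k : Fin d, C2 * ((c k ^ 2 / (8 * b ^ 2) - 1 / (4 * b)) *
          ∏ j : Fin d, ∫ t : ℝ, E j t) := by
        refine Finset.sum_congr rfl fun k _ ↦ ?_
        congr 1
        rw [Finset.prod_congr rfl fun j _ ↦ hfval k j]
        exact aux_prod_if_eq k _ _
    _ = (∑ k : Fin d, (c k ^ 2 / (8 * b ^ 2) - 1 / (4 * b))) *
          (C2 * ∏ j : Fin d, ∫ t : ℝ, E j t) := by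
        rw [Finset.sum_mul]
        exact Finset.sum_congr rfl fun k _ ↦ by ring
    _ = _ := by
        congr 1
        rw [integral_const_mul, integral_fintype_prod_volume_eq_prod (f := fun j t ↦ E j t)]

lemma aux_coef {ε : ℝ} (hε : 0 < ε) (a1 a2 b1 b2 : ℝ) :
    auxC ε a1 a2 b1 b2 ^ 2 / (8 * auxB ε ^ 2) - 1 / (4 * auxB ε) =
      (1 / 8 : ℂ) * (2 * (ε : ℂ) -
        (((b1 - b2 : ℝ) : ℂ) + Complex.I * ((a1 + a2 : ℝ) : ℂ)) ^ 2) := by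
  have hε0 : (ε : ℂ) ≠ 0 := Complex.ofReal_ne_zero.mpr hε.ne'
  have hI : (Complex.I : ℂ) ^ 2 = -1 := Complex.I_sq
  unfold auxB auxC
  push_cast
  field_simp
  ring_nf
  linear_combination (4 * (((a1:ℂ)+a2)^2 + ((b1:ℂ)-b2)^2)) * hI

set_option maxHeartbeats 2000000 in
/-- Matrix element of the harmonic oscillator potential `|x|²/2` between two
Gaussian wave packets. -/
theorem gaussian_matrix_element_harmonic
    {d : ℕ} (ε : ℝ) (hε : 0 < ε)
    (q₁ p₁ q₂ p₂ : EuclideanSpace ℝ (Fin d)) :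
    ∫ x : EuclideanSpace ℝ (Fin d),
        (starRingEnd ℂ) (gaussWP ε q₁ p₁ x) * ((‖x‖ ^ 2 / 2 : ℝ) : ℂ) *
          gaussWP ε q₂ p₂ x
      = (∑ k : Fin d, (1 / 8 : ℂ) *
          (2 * (ε : ℂ) - (((p₁ k - p₂ k : ℝ) : ℂ) +
            Complex.I * ((q₁ k + q₂ k : ℝ) : ℂ)) ^ 2)) *
        ∫ x : EuclideanSpace ℝ (Fin d),
          (starRingEnd ℂ) (gaussWP ε q₁ p₁ x) * gaussWP ε q₂ p₂ x := by
  classical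
  have hb : (auxB ε).re < 0 := by
    unfold auxB
    simp only [Complex.ofReal_re]
    rw [neg_lt_zero]
    positivity
  have hmp : MeasurePreserving (⇑(MeasurableEquiv.toLp 2 (Fin d → ℝ)))
      volume volume :=
    (EuclideanSpace.volume_preserving_symm_measurableEquiv_toLp (Fin d)).symm
  have htrans := fun (g : EuclideanSpace ℝ (Fin d) → ℂ) ↦
    hmp.integral_comp (MeasurableEquiv.measurableEmbedding _) g
  rw [← htrans (fun x ↦ (starRingEnd ℂ) (gaussWP ε q₁ p₁ x) * ((‖x‖ ^ 2 / 2 : ℝ) : ℂ) *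
      gaussWP ε q₂ p₂ x),
    ← htrans (fun x ↦ (starRingEnd ℂ) (gaussWP ε q₁ p₁ x) * gaussWP ε q₂ p₂ x)]
  have hcoord : ∀ (y : Fin d → ℝ) (j : Fin d),
      ((MeasurableEquiv.toLp 2 (Fin d → ℝ)) y) j = y j := fun y j ↦ rfl
  have key2 : ∀ y : Fin d → ℝ,
      (starRingEnd ℂ) (gaussWP ε q₁ p₁ ((MeasurableEquiv.toLp 2 (Fin d → ℝ)) y)) *
          gaussWP ε q₂ p₂ ((MeasurableEquiv.toLp 2 (Fin d → ℝ)) y)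
        = (((Real.pi * ε) ^ (-(d : ℝ) / 4) : ℝ) : ℂ) ^ 2 *
          ∏ j : Fin d, Complex.exp (auxB ε * (y j) ^ 2 +
            auxC ε (q₁ j) (q₂ j) (p₁ j) (p₂ j) * (y j) +
            auxD ε (q₁ j) (q₂ j) (p₁ j) (p₂ j)) := by
    intro y
    rw [aux_pointwise hε q₁ p₁ q₂ p₂ _]
    congr 1
  have key1 : ∀ y : Fin d → ℝ,
      (starRingEnd ℂ) (gaussWP ε q₁ p₁ ((MeasurableEquiv.toLp 2 (Fin d → ℝ)) y)) *
          ((‖(MeasurableEquiv.toLp 2 (Fin d → ℝ)) y‖ ^ 2 / 2 : ℝ) : ℂ) *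
          gaussWP ε q₂ p₂ ((MeasurableEquiv.toLp 2 (Fin d → ℝ)) y)
        = ∑ k : Fin d, ((y k : ℂ) ^ 2 / 2) *
            ((((Real.pi * ε) ^ (-(d : ℝ) / 4) : ℝ) : ℂ) ^ 2 *
              ∏ j : Fin d, Complex.exp (auxB ε * (y j) ^ 2 +
                auxC ε (q₁ j) (q₂ j) (p₁ j) (p₂ j) * (y j) +
                auxD ε (q₁ j) (q₂ j) (p₁ j) (p₂ j))) := by
    intro y
    have hw : ((‖(MeasurableEquiv.toLp 2 (Fin d → ℝ)) y‖ ^ 2 / 2 : ℝ) : ℂ)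
        = ∑ k : Fin d, ((y k : ℂ) ^ 2 / 2) := by
      rw [aux_norm_sq_eq]
      push_cast
      rw [Finset.sum_div]
      simp only [hcoord]
    calc (starRingEnd ℂ) (gaussWP ε q₁ p₁ _) * ((‖(MeasurableEquiv.toLp 2
            (Fin d → ℝ)) y‖ ^ 2 / 2 : ℝ) : ℂ) * gaussWP ε q₂ p₂ _
        = ((‖(MeasurableEquiv.toLp 2 (Fin d → ℝ)) y‖ ^ 2 / 2 : ℝ) : ℂ) *
            ((starRingEnd ℂ) (gaussWP ε q₁ p₁ _) * gaussWP ε q₂ p₂ _) := by ring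
      _ = _ := by rw [hw, key2 y, Finset.sum_mul]
  calc ∫ y : Fin d → ℝ,
        (starRingEnd ℂ) (gaussWP ε q₁ p₁ ((MeasurableEquiv.toLp 2 (Fin d → ℝ)) y)) *
          ((‖(MeasurableEquiv.toLp 2 (Fin d → ℝ)) y‖ ^ 2 / 2 : ℝ) : ℂ) *
          gaussWP ε q₂ p₂ ((MeasurableEquiv.toLp 2 (Fin d → ℝ)) y)
      = ∫ y : Fin d → ℝ, ∑ k : Fin d, ((y k : ℂ) ^ 2 / 2) *
            ((((Real.pi * ε) ^ (-(d : ℝ) / 4) : ℝ) : ℂ) ^ 2 *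
              ∏ j : Fin d, Complex.exp (auxB ε * (y j) ^ 2 +
                auxC ε (q₁ j) (q₂ j) (p₁ j) (p₂ j) * (y j) +
                auxD ε (q₁ j) (q₂ j) (p₁ j) (p₂ j))) := by
        congr 1; funext y; exact key1 y
    _ = (∑ k : Fin d, (auxC ε (q₁ k) (q₂ k) (p₁ k) (p₂ k) ^ 2 / (8 * auxB ε ^ 2) -
            1 / (4 * auxB ε))) *
          ∫ y : Fin d → ℝ, (((Real.pi * ε) ^ (-(d : ℝ) / 4) : ℝ) : ℂ) ^ 2 *
            ∏ j : Fin d, Complex.exp (auxB ε * (y j) ^ 2 +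
              auxC ε (q₁ j) (q₂ j) (p₁ j) (p₂ j) * (y j) +
              auxD ε (q₁ j) (q₂ j) (p₁ j) (p₂ j)) :=
        aux_main_pi hb _ _ _
    _ = _ := by
        congr 1
        · exact Finset.sum_congr rfl fun k _ ↦ aux_coef hε (q₁ k) (q₂ k) (p₁ k) (p₂ k)
        · congr 1; funext y; exact (key2 y).symm
end

section
/- Let ε > 0 and z₁ = (q₁, p₁), z₂ = (q₂, p₂) ∈ ℝ^d × ℝ^d. Then the matrix element of the torsional potential V(x) = ∑_{k=1}^d (1 − cos(x_k)) between two Gaussian wave packets satisfies ∫_{ℝ^d} conj(g^ε_{z₁}(x)) · [∑_{k=1}^d (1 − cos(x_k))] · g^ε_{z₂}(x) dx = [ ∑_{k=1}^d ( 1 − e^{−ε/4} cosh( (1/2)(p₁ₖ − p₂ₖ) + (i/2)(q₁ₖ + q₂ₖ) ) ) ] · ⟨g^ε_{z₁}, g^ε_{z₂}⟩, where cosh denotes the complex hyperbolic cosine. -/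
open MeasureTheory

namespace GaussAux

open Complex

/-- one-dimensional complex Gaussian integral -/
lemma one_dim_int {b : ℂ} (hb : b.re < 0) (c : ℂ) :
    ∫ x : ℝ, Complex.exp (b * x ^ 2 + c * x)
      = (↑Real.pi / -b) ^ (1/2 : ℂ) * Complex.exp (-(c^2) / (4*b)) := by
  have h := integral_cexp_quadratic hb c 0
  simpa [zero_sub, neg_div] using h

lemma one_dim_integrable {b : ℂ} (hb : b.re < 0) (c : ℂ) :
    Integrable (fun x : ℝ => Complex.exp (b * x ^ 2 + c * x)) := by
  have h := integrable_cexp_quadratic' hb c 0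
  simpa using h

/-- the multi-dimensional Gaussian integrand -/
noncomputable def Ef (b : ℂ) {d : ℕ} (c : Fin d → ℂ) (x : EuclideanSpace ℝ (Fin d)) : ℂ :=
  Complex.exp (∑ j, (b * (x j : ℂ)^2 + c j * (x j : ℂ)))

lemma gauss_integrable {d : ℕ} {b : ℂ} (hb : b.re < 0) (c : Fin d → ℂ) :
    Integrable (fun x : EuclideanSpace ℝ (Fin d) => Ef b c x) := by
  rw [← ((EuclideanSpace.volume_preserving_symm_measurableEquiv_toLp (Fin d)).symm).integrable_comp_emb
    (MeasurableEquiv.measurableEmbedding _)]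
  have : (fun x : EuclideanSpace ℝ (Fin d) => Ef b c x) ∘
      ((MeasurableEquiv.toLp 2 (Fin d → ℝ)).symm).symm
      = fun x : Fin d → ℝ => ∏ k, Complex.exp (b * (x k : ℂ)^2 + c k * (x k : ℂ)) := by
    ext x
    simp [Function.comp, Ef, MeasurableEquiv.coe_toLp, Complex.exp_sum]
  rw [this]
  exact Integrable.fintype_prod (fun k => one_dim_integrable hb (c k))

lemma gauss_int {d : ℕ} {b : ℂ} (hb : b.re < 0) (c : Fin d → ℂ) :
    (∫ x : EuclideanSpace ℝ (Fin d), Ef b c x)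
      = ∏ k, ((↑Real.pi / -b) ^ (1/2 : ℂ) * Complex.exp (-((c k)^2) / (4*b))) := by
  rw [← ((EuclideanSpace.volume_preserving_symm_measurableEquiv_toLp (Fin d)).symm).integral_comp'
    (fun x : EuclideanSpace ℝ (Fin d) => Ef b c x)]
  have : (fun x : Fin d → ℝ => Ef b c (((MeasurableEquiv.toLp 2 (Fin d → ℝ)).symm).symm x))
      = fun x : Fin d → ℝ => ∏ k, Complex.exp (b * (x k : ℂ)^2 + c k * (x k : ℂ)) := by
    ext x
    simp [Ef, MeasurableEquiv.coe_toLp, Complex.exp_sum]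
  rw [show (∫ x : Fin d → ℝ, Ef b c (((MeasurableEquiv.toLp 2 (Fin d → ℝ)).symm).symm x))
      = ∫ x : Fin d → ℝ, ∏ k, Complex.exp (b * (x k : ℂ)^2 + c k * (x k : ℂ)) from
    congrArg _ this]
  rw [volume_pi, integral_fintype_prod_eq_prod (ι := Fin d) (fun k (t : ℝ) => Complex.exp (b * (t:ℂ)^2 + c k * t))]
  exact Finset.prod_congr rfl fun k _ => one_dim_int hb (c k)

noncomputable def gwC (ε : ℝ) {d : ℕ} (q₁ p₁ q₂ p₂ : EuclideanSpace ℝ (Fin d)) (k : Fin d) : ℂ :=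
  ((q₁ k : ℂ) + (q₂ k : ℂ))/(ε:ℂ) + Complex.I * ((p₂ k : ℂ) - (p₁ k : ℂ))/(ε:ℂ)

noncomputable def gwA (ε : ℝ) {d : ℕ} (q₁ p₁ q₂ p₂ : EuclideanSpace ℝ (Fin d)) : ℂ :=
  (((Real.pi * ε) ^ (-(d : ℝ) / 4) : ℝ) : ℂ)^2 *
  Complex.exp (∑ k, (-(((q₁ k:ℂ))^2 + ((q₂ k:ℂ))^2)/(2*(ε:ℂ))
      + Complex.I * ((p₁ k:ℂ) * (q₁ k:ℂ) - (p₂ k:ℂ) * (q₂ k:ℂ))/(ε:ℂ)))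

lemma norm_sub_sq_eq {d : ℕ} (q x : EuclideanSpace ℝ (Fin d)) :
    ‖x - q‖ ^ 2 = ∑ k, (x k - q k) ^ 2 := by
  rw [← real_inner_self_eq_norm_sq, PiLp.inner_apply]
  refine Finset.sum_congr rfl fun k _ => ?_
  simp [RCLike.inner_apply, PiLp.sub_apply, sq]

lemma inner_sub_eq {d : ℕ} (p q x : EuclideanSpace ℝ (Fin d)) :
    (inner ℝ p (x - q) : ℝ) = ∑ k, p k * (x k - q k) := by
  rw [PiLp.inner_apply]
  refine Finset.sum_congr rfl fun k _ => ?_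
  simp [RCLike.inner_apply, PiLp.sub_apply]
  ring

lemma pair_eq {d : ℕ} {ε : ℝ} (hε : 0 < ε) (q₁ p₁ q₂ p₂ x : EuclideanSpace ℝ (Fin d)) :
    (starRingEnd ℂ) (gaussWP ε q₁ p₁ x) * gaussWP ε q₂ p₂ x
      = gwA ε q₁ p₁ q₂ p₂ * Ef (-(1/(ε:ℂ))) (gwC ε q₁ p₁ q₂ p₂) x := by
  have hε' : (ε : ℂ) ≠ 0 := Complex.ofReal_ne_zero.mpr hε.ne'
  unfold gaussWP gwA gwC Ef
  rw [map_mul, Complex.conj_ofReal, ← Complex.exp_conj]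
  simp only [map_add, map_mul, map_div₀, Complex.conj_ofReal, Complex.conj_I]
  rw [mul_mul_mul_comm, ← Complex.exp_add, ← sq, mul_assoc, ← Complex.exp_add]
  congr 1
  congr 1
  rw [norm_sub_sq_eq, norm_sub_sq_eq, inner_sub_eq, inner_sub_eq]
  push_cast
  simp only [neg_div, Finset.sum_div, Finset.mul_sum, sub_eq_add_neg, neg_mul]
  simp only [← Finset.sum_neg_distrib]
  simp only [← Finset.sum_add_distrib]
  refine Finset.sum_congr rfl fun k _ => ?_
  field_simp
  ring

end GaussAux

/-- Matrix element of the torsional potential `V(x) = ∑ₖ (1 − cos xₖ)` between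
two Gaussian wave packets. -/
theorem gaussian_matrix_element_torsional
    {d : ℕ} (ε : ℝ) (hε : 0 < ε)
    (q₁ p₁ q₂ p₂ : EuclideanSpace ℝ (Fin d)) :
    ∫ x : EuclideanSpace ℝ (Fin d),
        (starRingEnd ℂ) (gaussWP ε q₁ p₁ x) *
          ((∑ k : Fin d, (1 - Real.cos (x k)) : ℝ) : ℂ) *
          gaussWP ε q₂ p₂ x
      = (∑ k : Fin d,
          (1 - Complex.exp (((-ε / 4 : ℝ) : ℂ)) *
            Complex.cosh ((((p₁ k - p₂ k : ℝ) : ℂ)) / 2 +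
              Complex.I / 2 * ((q₁ k + q₂ k : ℝ) : ℂ)))) *
        ∫ x : EuclideanSpace ℝ (Fin d),
          (starRingEnd ℂ) (gaussWP ε q₁ p₁ x) * gaussWP ε q₂ p₂ x := by
  classical
  have hε' : (ε : ℂ) ≠ 0 := Complex.ofReal_ne_zero.mpr hε.ne'
  set b : ℂ := -(1/(ε:ℂ)) with hbdef
  have hb : b.re < 0 := by
    have : b = ((-(1/ε) : ℝ) : ℂ) := by push_cast [hbdef]; ring
    rw [this, Complex.ofReal_re]
    have : (0:ℝ) < 1/ε := by positivity
    linarith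
  have hb0 : b ≠ 0 := by
    intro h
    rw [h] at hb
    simp at hb
  set c : Fin d → ℂ := GaussAux.gwC ε q₁ p₁ q₂ p₂ with hcdef
  set A : ℂ := GaussAux.gwA ε q₁ p₁ q₂ p₂ with hAdef
  -- shifted coefficient functions
  set cp : Fin d → Fin d → ℂ := fun k j => c j + if j = k then Complex.I else 0 with hcp
  set cm : Fin d → Fin d → ℂ := fun k j => c j + if j = k then -Complex.I else 0 with hcm
  -- shift identity for the exponent
  have hshift : ∀ (k : Fin d) (w : ℂ) (x : EuclideanSpace ℝ (Fin d)),
      (∑ j, (b * (x j : ℂ)^2 + (c j + if j = k then w else 0) * (x j : ℂ)))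
        = (∑ j, (b * (x j : ℂ)^2 + c j * (x j : ℂ))) + w * (x k : ℂ) := by
    intro k w x
    simp only [add_mul, ite_mul, zero_mul, ← add_assoc]
    rw [Finset.sum_add_distrib, Finset.sum_ite_eq' Finset.univ k (fun j => w * (x j : ℂ))]
    simp
  have hcosh : ∀ z : ℂ, Complex.cosh z = (Complex.exp z + Complex.exp (-z))/2 := fun z => rfl
  have hcos : ∀ z : ℂ, Complex.cos z =
      (Complex.exp (z * Complex.I) + Complex.exp (-z * Complex.I))/2 := fun z => rfl
  -- pointwise decomposition of the integrand
  have hpt : ∀ x : EuclideanSpace ℝ (Fin d),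
      (starRingEnd ℂ) (gaussWP ε q₁ p₁ x) *
          ((∑ k : Fin d, (1 - Real.cos (x k)) : ℝ) : ℂ) * gaussWP ε q₂ p₂ x
        = ∑ k : Fin d, (A * GaussAux.Ef b c x - A/2 * GaussAux.Ef b (cp k) x
            - A/2 * GaussAux.Ef b (cm k) x) := by
    intro x
    have h0 := GaussAux.pair_eq hε q₁ p₁ q₂ p₂ x
    rw [← hcdef, ← hAdef, ← hbdef] at h0
    have hV : ((∑ k : Fin d, (1 - Real.cos (x k)) : ℝ) : ℂ)
        = ∑ k : Fin d, (1 - Complex.cos ((x k : ℝ) : ℂ)) := by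
      push_cast [Complex.ofReal_cos]
      rfl
    calc (starRingEnd ℂ) (gaussWP ε q₁ p₁ x) *
          ((∑ k : Fin d, (1 - Real.cos (x k)) : ℝ) : ℂ) * gaussWP ε q₂ p₂ x
        = ((∑ k : Fin d, (1 - Real.cos (x k)) : ℝ) : ℂ) *
            ((starRingEnd ℂ) (gaussWP ε q₁ p₁ x) * gaussWP ε q₂ p₂ x) := by ring
      _ = (∑ k : Fin d, (1 - Complex.cos ((x k : ℝ) : ℂ))) * (A * GaussAux.Ef b c x) := by
            rw [h0, hV]
      _ = ∑ k : Fin d, ((1 - Complex.cos ((x k : ℝ) : ℂ))) * (A * GaussAux.Ef b c x) :=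
            Finset.sum_mul _ _ _
      _ = ∑ k : Fin d, (A * GaussAux.Ef b c x - A/2 * GaussAux.Ef b (cp k) x
            - A/2 * GaussAux.Ef b (cm k) x) := by
            refine Finset.sum_congr rfl fun k _ => ?_
            have hp : GaussAux.Ef b (cp k) x
                = GaussAux.Ef b c x * Complex.exp (Complex.I * (x k : ℂ)) := by
              unfold GaussAux.Ef
              rw [hcp]
              rw [hshift k Complex.I x, Complex.exp_add]
            have hm : GaussAux.Ef b (cm k) x
                = GaussAux.Ef b c x * Complex.exp (-Complex.I * (x k : ℂ)) := by
              unfold GaussAux.Ef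
              rw [hcm]
              rw [hshift k (-Complex.I) x, Complex.exp_add]
            rw [hp, hm, hcos]
            rw [show ((x k : ℂ)) * Complex.I = Complex.I * (x k : ℂ) from mul_comm _ _,
              show (-(x k : ℂ)) * Complex.I = -Complex.I * (x k : ℂ) by ring]
            ring
  -- the base overlap integral
  have hbase : (∫ x : EuclideanSpace ℝ (Fin d),
      (starRingEnd ℂ) (gaussWP ε q₁ p₁ x) * gaussWP ε q₂ p₂ x)
      = A * ∏ j, ((↑Real.pi / -b) ^ (1/2 : ℂ) * Complex.exp (-((c j)^2) / (4*b))) := by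
    have : (fun x : EuclideanSpace ℝ (Fin d) =>
        (starRingEnd ℂ) (gaussWP ε q₁ p₁ x) * gaussWP ε q₂ p₂ x)
        = fun x => A * GaussAux.Ef b c x := by
      ext x
      have h0 := GaussAux.pair_eq hε q₁ p₁ q₂ p₂ x
      rw [← hcdef, ← hAdef, ← hbdef] at h0
      exact h0
    rw [this, integral_const_mul, GaussAux.gauss_int hb c]
  -- product formula for shifted coefficients
  have hprod : ∀ (k : Fin d) (w : ℂ),
      (∏ j, ((↑Real.pi / -b) ^ (1/2 : ℂ) *
          Complex.exp (-(((c j + if j = k then w else 0))^2)/(4*b))))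
        = Complex.exp (-(2*w*c k + w^2)/(4*b)) *
          ∏ j, ((↑Real.pi / -b) ^ (1/2 : ℂ) * Complex.exp (-((c j)^2)/(4*b))) := by
    intro k w
    calc (∏ j, ((↑Real.pi / -b) ^ (1/2 : ℂ) *
          Complex.exp (-(((c j + if j = k then w else 0))^2)/(4*b))))
        = ∏ j, ((if j = k then Complex.exp (-(2*w*c k + w^2)/(4*b)) else 1) *
            ((↑Real.pi / -b) ^ (1/2 : ℂ) * Complex.exp (-((c j)^2)/(4*b)))) := by
          refine Finset.prod_congr rfl fun j _ => ?_
          by_cases h : j = k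
          · subst h
            simp only [eq_self_iff_true, if_true]
            rw [show (-((c j + w)^2)/(4*b)) = (-(2*w*c j + w^2)/(4*b)) + (-((c j)^2)/(4*b)) by
              field_simp; ring, Complex.exp_add]
            ring
          · simp [h]
      _ = (∏ j, (if j = k then Complex.exp (-(2*w*c k + w^2)/(4*b)) else 1)) *
            ∏ j, ((↑Real.pi / -b) ^ (1/2 : ℂ) * Complex.exp (-((c j)^2)/(4*b))) :=
          Finset.prod_mul_distrib
      _ = Complex.exp (-(2*w*c k + w^2)/(4*b)) *
            ∏ j, ((↑Real.pi / -b) ^ (1/2 : ℂ) * Complex.exp (-((c j)^2)/(4*b))) := by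
          rw [Finset.prod_ite_eq' Finset.univ k
            (fun _ => Complex.exp (-(2*w*c k + w^2)/(4*b)))]
          simp
  -- evaluate the LHS
  rw [show (fun x : EuclideanSpace ℝ (Fin d) =>
      (starRingEnd ℂ) (gaussWP ε q₁ p₁ x) *
        ((∑ k : Fin d, (1 - Real.cos (x k)) : ℝ) : ℂ) * gaussWP ε q₂ p₂ x)
      = fun x => ∑ k : Fin d, (A * GaussAux.Ef b c x - A/2 * GaussAux.Ef b (cp k) x
          - A/2 * GaussAux.Ef b (cm k) x) from funext hpt]
  have hI1 : Integrable (fun x : EuclideanSpace ℝ (Fin d) => A * GaussAux.Ef b c x) := by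
    exact (GaussAux.gauss_integrable hb c).const_mul A
  have hI2 : ∀ k : Fin d, Integrable
      (fun x : EuclideanSpace ℝ (Fin d) => A/2 * GaussAux.Ef b (cp k) x) := fun k => by
    exact (GaussAux.gauss_integrable hb (cp k)).const_mul (A/2)
  have hI3 : ∀ k : Fin d, Integrable
      (fun x : EuclideanSpace ℝ (Fin d) => A/2 * GaussAux.Ef b (cm k) x) := fun k => by
    exact (GaussAux.gauss_integrable hb (cm k)).const_mul (A/2)
  have hI12 : ∀ k : Fin d, Integrable (fun x : EuclideanSpace ℝ (Fin d) =>
      A * GaussAux.Ef b c x - A/2 * GaussAux.Ef b (cp k) x) := fun k => by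
    exact hI1.sub (hI2 k)
  have hIall : ∀ k ∈ Finset.univ, Integrable (fun x : EuclideanSpace ℝ (Fin d) =>
      A * GaussAux.Ef b c x - A/2 * GaussAux.Ef b (cp k) x
        - A/2 * GaussAux.Ef b (cm k) x) := fun k _ => by
    exact (hI12 k).sub (hI3 k)
  rw [integral_finset_sum Finset.univ hIall]
  rw [hbase, Finset.sum_mul]
  refine Finset.sum_congr rfl fun k _ => ?_
  have e1 : (∫ x : EuclideanSpace ℝ (Fin d), (A * GaussAux.Ef b c x - A/2 * GaussAux.Ef b (cp k) x - A/2 * GaussAux.Ef b (cm k) x))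
      = (∫ x : EuclideanSpace ℝ (Fin d), (A * GaussAux.Ef b c x - A/2 * GaussAux.Ef b (cp k) x)) - ∫ x : EuclideanSpace ℝ (Fin d), A/2 * GaussAux.Ef b (cm k) x :=
    integral_sub (hI12 k) (hI3 k)
  rw [e1, integral_sub hI1 (hI2 k),
    integral_const_mul, integral_const_mul, integral_const_mul,
    GaussAux.gauss_int hb c, GaussAux.gauss_int hb (cp k), GaussAux.gauss_int hb (cm k)]
  have hPp := hprod k Complex.I
  have hPm := hprod k (-Complex.I)
  simp only [hcp, hcm]
  rw [hPp, hPm]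
  -- exponent identities
  set wk : ℂ := (((p₁ k - p₂ k : ℝ) : ℂ)) / 2 + Complex.I / 2 * ((q₁ k + q₂ k : ℝ) : ℂ) with hwk
  have hplus : -(2*Complex.I*c k + Complex.I^2)/(4*b) = ((-ε/4 : ℝ) : ℂ) + wk := by
    rw [Complex.I_sq, hwk, hcdef, hbdef]
    unfold GaussAux.gwC
    push_cast
    field_simp
    linear_combination (4*((p₂ k : ℂ)) - 4*((p₁ k : ℂ))) * Complex.I_sq
  have hminus : -(2*(-Complex.I)*c k + (-Complex.I)^2)/(4*b) = ((-ε/4 : ℝ) : ℂ) - wk := by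
    rw [neg_sq, Complex.I_sq, hwk, hcdef, hbdef]
    unfold GaussAux.gwC
    push_cast
    field_simp
    linear_combination (4*((p₁ k : ℂ)) - 4*((p₂ k : ℂ))) * Complex.I_sq
  have hsum : Complex.exp (-(2*Complex.I*c k + Complex.I^2)/(4*b))
      + Complex.exp (-(2*(-Complex.I)*c k + (-Complex.I)^2)/(4*b))
      = 2 * Complex.exp (((-ε/4 : ℝ) : ℂ)) * Complex.cosh wk := by
    rw [hplus, hminus, sub_eq_add_neg, hcosh]
    simp only [Complex.exp_add]
    ring
  set P : ℂ := ∏ j, ((↑Real.pi / -b) ^ (1/2 : ℂ) * Complex.exp (-((c j)^2)/(4*b))) with hP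
  linear_combination (-(A * P)/2) * hsum
end
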